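/- Let f be a twice continuously differentiable convex function on [-1,1]. Then for every integer n ≥ 2, the error of best uniform approximation of f by convex polynomials of degree at most n satisfies E_n^{(+2)}(f) ≤ E_{n-2}(f''), where E_{n-2}(f'') is the error of best uniform approximation on [-1,1] of the second derivative f'' by real polynomials of degree at most n−2. -/

import Mathlib

open Set Filter Polynomial

/-! ### Polynomial antiderivative -/

noncomputable def polyAntider (Q : Polynomial ℝ) : Polynomial ℝ :=
  Q.sum fun n a => Polynomial.C (a / (n + 1)) * Polynomial.X ^ (n + 1)

lemma polyAntider_derivative (Q : Polynomial ℝ) : (polyAntider Q).derivative = Q := by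
  unfold polyAntider
  rw [Polynomial.sum_def, map_sum]
  conv_rhs => rw [← Q.sum_C_mul_X_pow_eq]
  rw [Polynomial.sum_def]
  refine Finset.sum_congr rfl fun n _ => ?_
  rw [Polynomial.derivative_C_mul, Polynomial.derivative_X_pow]
  rw [← mul_assoc, ← Polynomial.C_mul]
  congr 2
  push_cast
  field_simp

lemma polyAntider_natDegree (Q : Polynomial ℝ) :
    (polyAntider Q).natDegree ≤ Q.natDegree + 1 := by
  unfold polyAntider
  rw [Polynomial.sum_def]
  refine Polynomial.natDegree_sum_le_of_forall_le _ _ fun i hi => ?_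
  refine (Polynomial.natDegree_C_mul_X_pow_le _ _).trans ?_
  have := Polynomial.le_natDegree_of_mem_supp i hi
  omega

/-! ### Basic facts about `f` on `Icc (-1) 1` -/

lemma aux_mem_nhds {x : ℝ} (hx : x ∈ Ioo (-1:ℝ) 1) : Icc (-1:ℝ) 1 ∈ nhds x :=
  Icc_mem_nhds hx.1 hx.2

lemma aux_ev (f : ℝ → ℝ) {x : ℝ} (hx : x ∈ Ioo (-1:ℝ) 1) :
    derivWithin f (Icc (-1:ℝ) 1) =ᶠ[nhds x] deriv f :=
  Filter.eventuallyEq_of_mem (isOpen_Ioo.mem_nhds hx) fun y hy =>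
    derivWithin_of_mem_nhds (aux_mem_nhds hy)

lemma aux_fd (f : ℝ → ℝ) (hsmooth : ContDiffOn ℝ 2 f (Icc (-1:ℝ) 1))
    {x : ℝ} (hx : x ∈ Ioo (-1:ℝ) 1) : DifferentiableAt ℝ f x :=
  ((hsmooth.differentiableOn (by norm_num)) x (Ioo_subset_Icc_self hx)).differentiableAt
    (aux_mem_nhds hx)

lemma aux_fd1 (f : ℝ → ℝ) (hsmooth : ContDiffOn ℝ 2 f (Icc (-1:ℝ) 1))
    {x : ℝ} (hx : x ∈ Ioo (-1:ℝ) 1) : DifferentiableAt ℝ (deriv f) x := by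
  have hudo : UniqueDiffOn ℝ (Icc (-1:ℝ) 1) := uniqueDiffOn_Icc (by norm_num)
  have hf1 : ContDiffOn ℝ 1 (derivWithin f (Icc (-1:ℝ) 1)) (Icc (-1:ℝ) 1) :=
    hsmooth.derivWithin hudo (by norm_num)
  have h := ((hf1.differentiableOn (by norm_num)) x (Ioo_subset_Icc_self hx)).differentiableAt
    (aux_mem_nhds hx)
  exact (aux_ev f hx).differentiableAt_iff.mp h

lemma aux_second (f : ℝ → ℝ) (hsmooth : ContDiffOn ℝ 2 f (Icc (-1:ℝ) 1))
    {x : ℝ} (hx : x ∈ Ioo (-1:ℝ) 1) :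
    iteratedDerivWithin 2 f (Icc (-1:ℝ) 1) x = deriv (deriv f) x := by
  have hudo : UniqueDiffOn ℝ (Icc (-1:ℝ) 1) := uniqueDiffOn_Icc (by norm_num)
  have hx' := Ioo_subset_Icc_self hx
  rw [show (2:ℕ) = 1 + 1 from rfl,
    iteratedDerivWithin_succ,
    iteratedDerivWithin_one,
    derivWithin_of_mem_nhds (aux_mem_nhds hx)]
  exact (aux_ev f hx).deriv_eq

/-! ### Convexity from second-derivative sign -/

lemma aux_convexOn (f : ℝ → ℝ) (hsmooth : ContDiffOn ℝ 2 f (Icc (-1:ℝ) 1))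
    (σ : ℝ) (R : Polynomial ℝ)
    (hsign : ∀ x ∈ Icc (-1:ℝ) 1,
      0 ≤ σ * iteratedDerivWithin 2 f (Icc (-1:ℝ) 1) x + (R.derivative.derivative).eval x) :
    ConvexOn ℝ (Icc (-1:ℝ) 1) (fun x => σ * f x + R.eval x) := by
  have hgd : ∀ x ∈ Ioo (-1:ℝ) 1, DifferentiableAt ℝ (fun x => σ * f x + R.eval x) x :=
    fun x hx => (((aux_fd f hsmooth hx).const_mul σ).add R.differentiableAt)
  have hg' : ∀ y ∈ Ioo (-1:ℝ) 1,
      deriv (fun x => σ * f x + R.eval x) y = σ * deriv f y + R.derivative.eval y := by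
    intro y hy
    rw [deriv_fun_add ((aux_fd f hsmooth hy).const_mul σ) R.differentiableAt,
      deriv_const_mul σ (aux_fd f hsmooth hy), Polynomial.deriv]
  have hevg : ∀ x ∈ Ioo (-1:ℝ) 1,
      deriv (fun x => σ * f x + R.eval x) =ᶠ[nhds x]
        fun y => σ * deriv f y + R.derivative.eval y :=
    fun x hx => Filter.eventuallyEq_of_mem (isOpen_Ioo.mem_nhds hx) hg'
  have hgd2 : ∀ x ∈ Ioo (-1:ℝ) 1,
      DifferentiableAt ℝ (deriv (fun x => σ * f x + R.eval x)) x := fun x hx =>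
    (hevg x hx).differentiableAt_iff.mpr
      (((aux_fd1 f hsmooth hx).const_mul σ).add R.derivative.differentiableAt)
  have hg'' : ∀ x ∈ Ioo (-1:ℝ) 1,
      deriv (deriv (fun x => σ * f x + R.eval x)) x
        = σ * deriv (deriv f) x + (R.derivative.derivative).eval x := by
    intro x hx
    rw [(hevg x hx).deriv_eq,
      deriv_fun_add ((aux_fd1 f hsmooth hx).const_mul σ) R.derivative.differentiableAt,
      deriv_const_mul σ (aux_fd1 f hsmooth hx), Polynomial.deriv]
  refine convexOn_of_deriv2_nonneg (convex_Icc _ _) ?_ ?_ ?_ ?_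
  · exact (continuousOn_const.mul hsmooth.continuousOn).add R.continuousOn
  · rw [interior_Icc]; exact fun x hx => (hgd x hx).differentiableWithinAt
  · rw [interior_Icc]; exact fun x hx => (hgd2 x hx).differentiableWithinAt
  · rw [interior_Icc]
    intro x hx
    have h2 : deriv^[2] (fun x => σ * f x + R.eval x) x
        = deriv (deriv (fun x => σ * f x + R.eval x)) x := rfl
    rw [h2, hg'' x hx]
    have := hsign x (Ioo_subset_Icc_self hx)
    rwa [aux_second f hsmooth hx] at this

/-! ### Nonnegativity of the second derivative of a convex function -/

lemma aux_f2_nonneg (f : ℝ → ℝ) (hsmooth : ContDiffOn ℝ 2 f (Icc (-1:ℝ) 1))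
    (hconv : ConvexOn ℝ (Icc (-1:ℝ) 1) f) :
    ∀ x ∈ Icc (-1:ℝ) 1, 0 ≤ iteratedDerivWithin 2 f (Icc (-1:ℝ) 1) x := by
  have hudo : UniqueDiffOn ℝ (Icc (-1:ℝ) 1) := uniqueDiffOn_Icc (by norm_num)
  have hmono : MonotoneOn (deriv f) (Ioo (-1:ℝ) 1) := by
    have h := hconv.monotoneOn_derivWithin (hsmooth.differentiableOn (by norm_num))
    intro a ha b hb hab
    have := h (Ioo_subset_Icc_self ha) (Ioo_subset_Icc_self hb) hab
    rwa [derivWithin_of_mem_nhds (aux_mem_nhds ha),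
      derivWithin_of_mem_nhds (aux_mem_nhds hb)] at this
  have key : ∀ y ∈ Ioo (-1:ℝ) 1, 0 ≤ iteratedDerivWithin 2 f (Icc (-1:ℝ) 1) y := by
    intro y hy
    rw [aux_second f hsmooth hy]
    have hd : Tendsto (slope (deriv f) y) (nhdsWithin y {y}ᶜ) (nhds (deriv (deriv f) y)) :=
      hasDerivAt_iff_tendsto_slope.mp (aux_fd1 f hsmooth hy).hasDerivAt
    have hd' : Tendsto (slope (deriv f) y) (nhdsWithin y (Ioi y)) (nhds (deriv (deriv f) y)) :=
      hd.mono_left (nhdsWithin_mono _ fun z hz => ne_of_gt hz)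
    refine ge_of_tendsto hd' ?_
    filter_upwards [self_mem_nhdsWithin,
      eventually_nhdsWithin_of_eventually_nhds (eventually_lt_nhds hy.2)] with z hz1 hz2
    have hzI : z ∈ Ioo (-1:ℝ) 1 := ⟨lt_trans hy.1 hz1, hz2⟩
    rw [slope_def_field]
    have h1 : deriv f y ≤ deriv f z := hmono hy hzI (le_of_lt hz1)
    have h2 : (0:ℝ) < z - y := by simp only [mem_Ioi] at hz1; linarith
    exact div_nonneg (by linarith) h2.le
  intro x hx
  have hcont : ContinuousOn (iteratedDerivWithin 2 f (Icc (-1:ℝ) 1)) (Icc (-1:ℝ) 1) :=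
    hsmooth.continuousOn_iteratedDerivWithin (by norm_num) hudo
  have hne : (nhdsWithin x (Ioo (-1:ℝ) 1)).NeBot := by
    apply mem_closure_iff_nhdsWithin_neBot.mp
    rw [closure_Ioo (by norm_num : (-1:ℝ) ≠ 1)]
    exact hx
  exact ge_of_tendsto ((hcont x hx).mono Ioo_subset_Icc_self)
    (by filter_upwards [self_mem_nhdsWithin] with z hz; exact key z hz)

/-! ### Convex functions vanishing at the endpoints are nonpositive -/

lemma aux_nonpos {g : ℝ → ℝ} (hg : ConvexOn ℝ (Icc (-1:ℝ) 1) g)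
    (h1 : g 1 ≤ 0) (hm : g (-1) ≤ 0) : ∀ x ∈ Icc (-1:ℝ) 1, g x ≤ 0 := by
  intro x hx
  have ha : (0:ℝ) ≤ (1 - x)/2 := by linarith [hx.2]
  have hb : (0:ℝ) ≤ (1 + x)/2 := by linarith [hx.1]
  have hab : (1 - x)/2 + (1 + x)/2 = 1 := by ring
  have h := hg.2 (show (-1:ℝ) ∈ Icc (-1:ℝ) 1 by norm_num)
    (show (1:ℝ) ∈ Icc (-1:ℝ) 1 by norm_num) ha hb hab
  simp only [smul_eq_mul] at h
  have hx' : (1 - x)/2 * (-1) + (1 + x)/2 * 1 = x := by ring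
  rw [hx'] at h
  nlinarith [mul_nonpos_of_nonneg_of_nonpos ha hm, mul_nonpos_of_nonneg_of_nonpos hb h1]



/-- Error of best uniform approximation of `f` on `[-1,1]` by real polynomials
of degree at most `n`. -/
noncomputable def bestApproxError (n : ℕ) (f : ℝ → ℝ) : ℝ :=
  sInf {r : ℝ | ∃ P : Polynomial ℝ, P.natDegree ≤ n ∧
    r = ⨆ x : Set.Icc (-1 : ℝ) 1, |P.eval (x : ℝ) - f x|}

/-- Error of best uniform approximation of `f` on `[-1,1]` by convex polynomials
(i.e. polynomials with nonnegative second derivative on `[-1,1]`) of degree at most `n`. -/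
noncomputable def bestConvexApproxError (n : ℕ) (f : ℝ → ℝ) : ℝ :=
  sInf {r : ℝ | ∃ P : Polynomial ℝ, P.natDegree ≤ n ∧
    (∀ x ∈ Set.Icc (-1 : ℝ) 1, 0 ≤ (P.derivative.derivative).eval x) ∧
    r = ⨆ x : Set.Icc (-1 : ℝ) 1, |P.eval (x : ℝ) - f x|}

/-- For a twice continuously differentiable convex function `f` on `[-1,1]` and `n ≥ 2`,
`E_n^{(+2)}(f) ≤ E_{n-2}(f'')`. -/
theorem convex_approx_le_approx_second_deriv (f : ℝ → ℝ)
    (hsmooth : ContDiffOn ℝ 2 f (Set.Icc (-1 : ℝ) 1))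
    (hconv : ConvexOn ℝ (Set.Icc (-1 : ℝ) 1) f) :
    ∀ n : ℕ, 2 ≤ n →
      bestConvexApproxError n f ≤
        bestApproxError (n - 2) (iteratedDerivWithin 2 f (Set.Icc (-1 : ℝ) 1)) := by
  intro n hn
  set f2 := iteratedDerivWithin 2 f (Set.Icc (-1:ℝ) 1) with hf2def
  have hudo : UniqueDiffOn ℝ (Icc (-1:ℝ) 1) := uniqueDiffOn_Icc (by norm_num)
  have hf2cont : ContinuousOn f2 (Icc (-1:ℝ) 1) :=
    hsmooth.continuousOn_iteratedDerivWithin (by norm_num) hudo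
  have hf2nonneg := aux_f2_nonneg f hsmooth hconv
  -- lower bound for the convex-approximation set
  have hbddbelow : BddBelow {r : ℝ | ∃ P : Polynomial ℝ, P.natDegree ≤ n ∧
      (∀ x ∈ Set.Icc (-1 : ℝ) 1, 0 ≤ (P.derivative.derivative).eval x) ∧
      r = ⨆ x : Set.Icc (-1 : ℝ) 1, |P.eval (x : ℝ) - f x|} := by
    refine ⟨0, ?_⟩
    rintro r ⟨P, -, -, rfl⟩
    exact Real.iSup_nonneg fun x => abs_nonneg _
  apply le_csInf
  · exact ⟨_, ⟨0, by simp, rfl⟩⟩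
  rintro r ⟨Q, hQdeg, rfl⟩
  set E := ⨆ x : Set.Icc (-1:ℝ) 1, |Q.eval (x:ℝ) - f2 x| with hE
  have hbdd : BddAbove (Set.range fun x : Set.Icc (-1:ℝ) 1 => |Q.eval (x:ℝ) - f2 (x:ℝ)|) := by
    have hc : ContinuousOn (fun x : ℝ => |Q.eval x - f2 x|) (Icc (-1:ℝ) 1) :=
      (Q.continuousOn.sub hf2cont).abs
    have h := (isCompact_Icc.image_of_continuousOn hc).bddAbove
    refine h.mono ?_
    rintro s ⟨x, rfl⟩
    exact ⟨x, x.2, rfl⟩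
  have hpt : ∀ x ∈ Icc (-1:ℝ) 1, |Q.eval x - f2 x| ≤ E := fun x hx =>
    le_ciSup hbdd (⟨x, hx⟩ : Set.Icc (-1:ℝ) 1)
  have hEnonneg : 0 ≤ E := Real.iSup_nonneg fun x => abs_nonneg _
  -- construct the convex approximant
  set Qt : Polynomial ℝ := Q + Polynomial.C E with hQt
  set P0 : Polynomial ℝ := polyAntider (polyAntider Qt) with hP0
  set d1 : ℝ := f 1 - P0.eval 1 with hd1
  set dm : ℝ := f (-1) - P0.eval (-1) with hdm
  set P : Polynomial ℝ := P0 + Polynomial.C ((d1 + dm)/2) + Polynomial.C ((d1 - dm)/2) * Polynomial.X with hP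
  have hPd2 : P.derivative.derivative = Qt := by
    simp [hP, hP0, polyAntider_derivative]
  have hP1 : P.eval 1 = f 1 := by
    simp only [hP, Polynomial.eval_add, Polynomial.eval_mul, Polynomial.eval_C,
      Polynomial.eval_X, hd1, hdm]
    ring
  have hPm : P.eval (-1) = f (-1) := by
    simp only [hP, Polynomial.eval_add, Polynomial.eval_mul, Polynomial.eval_C,
      Polynomial.eval_X, hd1, hdm]
    ring
  have hPdeg : P.natDegree ≤ n := by
    have h1 : Qt.natDegree ≤ n - 2 := by
      refine (Polynomial.natDegree_add_le _ _).trans ?_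
      simp only [Polynomial.natDegree_C]
      omega
    have h2 : P0.natDegree ≤ n := by
      refine (polyAntider_natDegree _).trans ?_
      have := (polyAntider_natDegree Qt)
      omega
    refine (Polynomial.natDegree_add_le _ _).trans ?_
    refine max_le ((Polynomial.natDegree_add_le _ _).trans ?_) ?_
    · simp only [Polynomial.natDegree_C]
      omega
    · refine (Polynomial.natDegree_mul_le).trans ?_
      simp only [Polynomial.natDegree_C, Polynomial.natDegree_X]
      omega
  have hQtnonneg : ∀ x ∈ Icc (-1:ℝ) 1, 0 ≤ Qt.eval x := by
    intro x hx
    have h1 := (abs_le.mp (hpt x hx)).1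
    have h2 := hf2nonneg x hx
    simp only [hQt, Polynomial.eval_add, Polynomial.eval_C]
    linarith
  -- P ≤ f on the interval
  have hconvv : ConvexOn ℝ (Icc (-1:ℝ) 1) (fun x => (-1) * f x + P.eval x) := by
    refine aux_convexOn f hsmooth (-1) P fun x hx => ?_
    rw [hPd2]
    have h1 := (abs_le.mp (hpt x hx)).1
    simp only [hQt, Polynomial.eval_add, Polynomial.eval_C, ← hf2def]
    linarith
  have hPlef : ∀ x ∈ Icc (-1:ℝ) 1, P.eval x ≤ f x := by
    intro x hx
    have := aux_nonpos hconvv (by simp [hP1]) (by simp [hPm]) x hx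
    linarith [this]
  -- f − P ≤ E (1 − x²)
  set R : Polynomial ℝ := -P - Polynomial.C E + Polynomial.C E * Polynomial.X ^ 2 with hR
  have hRd2 : R.derivative.derivative = -Qt + Polynomial.C (2 * E) := by
    simp [hR, hPd2]
    ring
    rw [Polynomial.C_ofNat]
  have hconvu : ConvexOn ℝ (Icc (-1:ℝ) 1) (fun x => 1 * f x + R.eval x) := by
    refine aux_convexOn f hsmooth 1 R fun x hx => ?_
    rw [hRd2]
    have h1 := (abs_le.mp (hpt x hx)).2
    simp only [hQt, Polynomial.eval_add, Polynomial.eval_neg, Polynomial.eval_C, ← hf2def]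
    linarith
  have hfleP : ∀ x ∈ Icc (-1:ℝ) 1, f x - P.eval x ≤ E * (1 - x^2) := by
    intro x hx
    have h1 := aux_nonpos hconvu ?_ ?_ x hx
    · simp only [hR, Polynomial.eval_add, Polynomial.eval_sub, Polynomial.eval_neg,
        Polynomial.eval_mul, Polynomial.eval_C, Polynomial.eval_pow, Polynomial.eval_X] at h1
      nlinarith [h1]
    · simp [hR, hP1]
    · simp [hR, hPm]
  -- conclude
  have hptP : ∀ x : Set.Icc (-1:ℝ) 1, |P.eval (x:ℝ) - f x| ≤ E := by
    intro x
    have hx := x.2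
    have h1 := hPlef x hx
    have h2 := hfleP x hx
    have hx2 : (x:ℝ)^2 ≤ 1 := by
      have := hx.1; have := hx.2; nlinarith
    rw [abs_le]
    constructor
    · nlinarith
    · nlinarith
  refine le_trans (csInf_le hbddbelow ⟨P, hPdeg, ?_, rfl⟩) ?_
  · intro x hx
    rw [hPd2]
    exact hQtnonneg x hx
  · exact Real.iSup_le hptP hEnonneg
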